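/- The cubic Σ is the preimage of the curve Γ under Φ̃: for every point (b₀ : b₁ : b₂) ∈ ℙ²(ℂ) with (b₀t − b₁)(b₁² − b₀b₂) ≠ 0 (so that both affine coordinates z = (b₁t − b₂)/(b₀t − b₁) and w = −b₁(b₀λ − b₁λ − b₁ + b₂)/(b₁² − b₀b₂) of Φ̃ are defined and finite), one has P_Γ(z, w) = 0 if and only if Σ(b₀, b₁, b₂) = 0. -/
import Mathlib

/-- The bidegree `(2,2)` polynomial `P_Γ(z, w)` defining the curve `Γ ⊂ ℙ¹×ℙ¹`. -/
noncomputable def PGamma (l t z w : ℂ) : ℂ :=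
  t ^ 2 * z ^ 2 - 2 * t * z ^ 2 * w + t ^ 2 * w ^ 2 - 2 * t * z * w ^ 2 + z ^ 2 * w ^ 2
    - 2 * l * t * z - 2 * l * t * w + 2 * (2 * (l + 1) * t - t ^ 2 - l) * z * w + l ^ 2

/-- The cubic `Σ ⊂ ℙ²(ℂ)`, ramification locus of `Φ̃`. -/
noncomputable def SigmaCubic (l t b₀ b₁ b₂ : ℂ) : ℂ :=
  -(l * t ^ 2) * b₀ ^ 2 * b₁ + l * t * b₀ ^ 2 * b₂
    + (l * t ^ 2 + l * t + t ^ 2) * b₀ * b₁ ^ 2 - (t ^ 2 + l) * b₁ ^ 3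
    - 2 * (l * t + t) * b₀ * b₁ * b₂ + (l + t + 1) * b₁ ^ 2 * b₂
    + t * b₀ * b₂ ^ 2 - b₁ * b₂ ^ 2

set_option maxHeartbeats 1000000 in
lemma pgamma_mul (l t z w c d : ℂ) :
    PGamma l t z w * (c ^ 2 * d ^ 2)
      = t ^ 2 * (z * c) ^ 2 * d ^ 2 - 2 * t * (z * c) ^ 2 * (w * d) * d
        + t ^ 2 * (w * d) ^ 2 * c ^ 2 - 2 * t * (z * c) * (w * d) ^ 2 * c
        + (z * c) ^ 2 * (w * d) ^ 2 - 2 * l * t * (z * c) * c * d ^ 2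
        - 2 * l * t * (w * d) * c ^ 2 * d
        + 2 * (2 * (l + 1) * t - t ^ 2 - l) * (z * c) * (w * d) * c * d
        + l ^ 2 * c ^ 2 * d ^ 2 := by
  rw [PGamma]
  ring

set_option maxHeartbeats 2000000 in
/-- The cubic `Σ` is the preimage of the curve `Γ` under `Φ̃`. -/
theorem sigma_is_preimage_of_gamma (l t : ℂ) (hl0 : l ≠ 0) (hl1 : l ≠ 1)
    (ht0 : t ≠ 0) (ht1 : t ≠ 1) (htl : t ≠ l)
    (b₀ b₁ b₂ : ℂ) (h : (b₀ * t - b₁) * (b₁ ^ 2 - b₀ * b₂) ≠ 0) :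
    PGamma l t ((b₁ * t - b₂) / (b₀ * t - b₁))
        (-b₁ * (b₀ * l - b₁ * l - b₁ + b₂) / (b₁ ^ 2 - b₀ * b₂)) = 0 ↔
      SigmaCubic l t b₀ b₁ b₂ = 0 := by
  have h1 : b₀ * t - b₁ ≠ 0 := fun hh => h (by rw [hh]; ring)
  have h2 : b₁ ^ 2 - b₀ * b₂ ≠ 0 := fun hh => h (by rw [hh]; ring)
  have key : PGamma l t ((b₁ * t - b₂) / (b₀ * t - b₁))
        (-b₁ * (b₀ * l - b₁ * l - b₁ + b₂) / (b₁ ^ 2 - b₀ * b₂))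
        * ((b₀ * t - b₁) ^ 2 * (b₁ ^ 2 - b₀ * b₂) ^ 2)
      = (SigmaCubic l t b₀ b₁ b₂) ^ 2 := by
    have hA : (b₁ * t - b₂) / (b₀ * t - b₁) * (b₀ * t - b₁) = b₁ * t - b₂ :=
      div_mul_cancel₀ _ h1
    have hB : -b₁ * (b₀ * l - b₁ * l - b₁ + b₂) / (b₁ ^ 2 - b₀ * b₂) * (b₁ ^ 2 - b₀ * b₂)
        = -b₁ * (b₀ * l - b₁ * l - b₁ + b₂) := div_mul_cancel₀ _ h2
    rw [pgamma_mul, hA, hB, SigmaCubic]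
    ring
  constructor
  · intro H
    have hS : (SigmaCubic l t b₀ b₁ b₂) ^ 2 = 0 := by rw [← key, H, zero_mul]
    exact pow_eq_zero_iff (two_ne_zero) |>.mp hS
  · intro H
    have hD : (b₀ * t - b₁) ^ 2 * (b₁ ^ 2 - b₀ * b₂) ^ 2 ≠ 0 :=
      mul_ne_zero (pow_ne_zero _ h1) (pow_ne_zero _ h2)
    have hz : PGamma l t ((b₁ * t - b₂) / (b₀ * t - b₁))
        (-b₁ * (b₀ * l - b₁ * l - b₁ + b₂) / (b₁ ^ 2 - b₀ * b₂))
        * ((b₀ * t - b₁) ^ 2 * (b₁ ^ 2 - b₀ * b₂) ^ 2) = 0 := by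
      rw [key, H]; ring
    exact (mul_eq_zero.mp hz).resolve_right hD
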